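/- The sequence n_k = ⌊exp(k^{3/4})⌋ satisfies lim_{k→∞} (log n_{k+1}·log log n_{k+1} − log n_k·log log n_k) = 0. -/

import Mathlib

open Filter Real

noncomputable section

/-- The sparse sequence `n_k = ⌊exp(k^{3/4})⌋`. -/
def sparseSeq (k : ℕ) : ℕ := ⌊Real.exp ((k : ℝ) ^ ((3 : ℝ) / 4))⌋₊

namespace SparseAux

/-- `x_k = k^{3/4}`. -/
def X (k : ℕ) : ℝ := (k : ℝ) ^ ((3 : ℝ) / 4)

/-- `L k = log n_k`. -/
def L (k : ℕ) : ℝ := Real.log (sparseSeq k)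

/-- `G k = log n_k · log log n_k`. -/
def G (k : ℕ) : ℝ := L k * Real.log (L k)

/-- `H k = x_k log x_k`. -/
def H (k : ℕ) : ℝ := X k * Real.log (X k)

lemma X_tendsto : Tendsto X atTop atTop :=
  (tendsto_rpow_atTop (by norm_num : (0:ℝ) < 3/4)).comp tendsto_natCast_atTop_atTop

lemma X_ge_two {k : ℕ} (hk : 16 ≤ k) : 2 ≤ X k := by
  have h16 : ((16:ℝ)) ^ ((3:ℝ)/4) = 8 := by
    rw [show (16:ℝ) = 2 ^ (4:ℕ) by norm_num, ← Real.rpow_natCast 2 4,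
      ← Real.rpow_mul (by norm_num)]
    norm_num
  have hle : ((16:ℝ)) ^ ((3:ℝ)/4) ≤ X k := by
    apply Real.rpow_le_rpow (by norm_num) _ (by norm_num)
    exact_mod_cast hk
  rw [h16] at hle
  linarith

lemma L_bounds {k : ℕ} (hk : 16 ≤ k) :
    X k - 2 * Real.exp (-X k) ≤ L k ∧ L k ≤ X k := by
  set x := X k with hxdef
  have hx2 : 2 ≤ x := X_ge_two hk
  have hexp3 : (3:ℝ) ≤ Real.exp x := by
    have := Real.add_one_le_exp (2:ℝ)
    have h := Real.exp_le_exp.mpr hx2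
    linarith
  have hnfloor : (sparseSeq k : ℝ) = (⌊Real.exp x⌋₊ : ℝ) := by
    simp [sparseSeq, hxdef, X]
  have hnle : (sparseSeq k : ℝ) ≤ Real.exp x := by
    rw [hnfloor]; exact Nat.floor_le (Real.exp_pos _).le
  have hngt : Real.exp x - 1 ≤ (sparseSeq k : ℝ) := by
    rw [hnfloor]
    have := Nat.lt_floor_add_one (Real.exp x)
    linarith
  have hnpos : (0:ℝ) < (sparseSeq k : ℝ) := by linarith
  constructor
  · -- lower bound
    have h1 : (0:ℝ) < Real.exp x - 1 := by linarith
    have hlog1 : Real.log (Real.exp x - 1) ≤ L k :=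
      Real.log_le_log h1 hngt
    have hlog2 : x - 2 * Real.exp (-x) ≤ Real.log (Real.exp x - 1) := by
      rw [Real.le_log_iff_exp_le h1]
      set t := Real.exp (-x) with htdef
      have ht0 : 0 < t := Real.exp_pos _
      have ht3 : t ≤ 1/3 := by
        have : Real.exp (-x) ≤ Real.exp (-2) := Real.exp_le_exp.mpr (by linarith)
        have h2 : (3:ℝ) ≤ Real.exp 2 := by
          have := Real.add_one_le_exp (2:ℝ); linarith
        have : Real.exp (-2) ≤ 1/3 := by
          rw [Real.exp_neg]
          rw [inv_le_comm₀ (Real.exp_pos _) (by norm_num)] at *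
          · linarith
        linarith
      have htx : t * Real.exp x = 1 := by
        rw [htdef, ← Real.exp_add]; simp
      have hkey : 1 ≤ (1 - t) * Real.exp (2 * t) := by
        have h1' := Real.add_one_le_exp (2 * t)
        nlinarith
      have : Real.exp (x - 2 * t) = Real.exp x / Real.exp (2 * t) := by
        rw [Real.exp_sub]
      rw [this, div_le_iff₀ (Real.exp_pos _)]
      have hex : Real.exp x - 1 = Real.exp x * (1 - t) := by
        have : Real.exp x * t = 1 := by linarith [htx]; 
        nlinarith
      rw [hex]
      have hep := Real.exp_pos x
      nlinarith
    linarith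
  · -- upper bound
    exact (Real.log_le_iff_le_exp hnpos).mpr hnle

lemma tendsto_A : Tendsto (fun k => H k - G k) atTop (nhds 0) := by
  apply squeeze_zero' (g := fun k => 2 * X k * Real.exp (-X k) + 2 * Real.exp (-X k))
  · filter_upwards [eventually_ge_atTop 16] with k hk
    obtain ⟨hlo, hhi⟩ := L_bounds hk
    have hx2 : 2 ≤ X k := X_ge_two hk
    have hexpneg : Real.exp (-X k) ≤ 1/3 := by
      have : Real.exp (-X k) ≤ Real.exp (-2) := Real.exp_le_exp.mpr (by linarith)
      have h2 : (3:ℝ) ≤ Real.exp 2 := by have := Real.add_one_le_exp (2:ℝ); linarith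
      have : Real.exp (-2) ≤ 1/3 := by
        rw [Real.exp_neg, inv_le_comm₀ (Real.exp_pos _) (by norm_num)]; linarith
      linarith
    have hL1 : 1 ≤ L k := by linarith
    have hlogx : 0 ≤ Real.log (X k) := Real.log_nonneg (by linarith)
    have hloglog : Real.log (L k) ≤ Real.log (X k) :=
      Real.log_le_log (by linarith) hhi
    have hlogL : 0 ≤ Real.log (L k) := Real.log_nonneg hL1
    simp only [H, G]
    nlinarith
  · filter_upwards [eventually_ge_atTop 16] with k hk
    obtain ⟨hlo, hhi⟩ := L_bounds hk
    have hx2 : 2 ≤ X k := X_ge_two hk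
    have hexpneg0 : 0 < Real.exp (-X k) := Real.exp_pos _
    have hexpneg : Real.exp (-X k) ≤ 1/3 := by
      have : Real.exp (-X k) ≤ Real.exp (-2) := Real.exp_le_exp.mpr (by linarith)
      have h2 : (3:ℝ) ≤ Real.exp 2 := by have := Real.add_one_le_exp (2:ℝ); linarith
      have : Real.exp (-2) ≤ 1/3 := by
        rw [Real.exp_neg, inv_le_comm₀ (Real.exp_pos _) (by norm_num)]; linarith
      linarith
    have hL1 : 1 ≤ L k := by linarith
    have hLpos : 0 < L k := by linarith
    have hxleL : X k - L k ≤ 2 * Real.exp (-X k) := by linarith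
    -- term 1 : (x - L) * log x ≤ 2 e^{-x} * x
    have hlogxle : Real.log (X k) ≤ X k := by
      have := Real.log_le_sub_one_of_pos (show 0 < X k by linarith)
      linarith
    have hlogx0 : 0 ≤ Real.log (X k) := Real.log_nonneg (by linarith)
    have ht1 : (X k - L k) * Real.log (X k) ≤ 2 * Real.exp (-X k) * X k := by
      have := mul_le_mul hxleL hlogxle hlogx0 (by positivity)
      linarith
    -- term 2 : L * (log x - log L) ≤ x - L ≤ 2 e^{-x}
    have ht2 : L k * (Real.log (X k) - Real.log (L k)) ≤ 2 * Real.exp (-X k) := by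
      have hdiv : Real.log (X k) - Real.log (L k) = Real.log (X k / L k) := by
        rw [Real.log_div (by linarith) (by linarith)]
      have hfl : Real.log (X k / L k) ≤ X k / L k - 1 :=
        Real.log_le_sub_one_of_pos (by positivity)
      have : L k * (X k / L k - 1) = X k - L k := by field_simp
      calc L k * (Real.log (X k) - Real.log (L k))
          ≤ L k * (X k / L k - 1) := by
            rw [hdiv]; exact mul_le_mul_of_nonneg_left hfl hLpos.le
        _ = X k - L k := this
        _ ≤ 2 * Real.exp (-X k) := hxleL
    have hdecomp : H k - G k
        = (X k - L k) * Real.log (X k) + L k * (Real.log (X k) - Real.log (L k)) := by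
      simp only [H, G]; ring
    rw [hdecomp]; linarith
  · have hF : Tendsto (fun t : ℝ => 2 * t * Real.exp (-t) + 2 * Real.exp (-t))
        atTop (nhds 0) := by
      have h1 := tendsto_pow_mul_exp_neg_atTop_nhds_zero 1
      simp only [pow_one] at h1
      have h2 := Real.tendsto_exp_neg_atTop_nhds_zero
      have := (h1.const_mul 2).add (h2.const_mul 2)
      simpa [mul_assoc] using this
    exact hF.comp X_tendsto

lemma tendsto_B : Tendsto (fun k => H (k + 1) - H k) atTop (nhds 0) := by
  apply squeeze_zero'
    (g := fun k : ℕ => 16 * (k : ℝ) ^ (-(1/8 : ℝ)) + (k : ℝ) ^ (-(1/4 : ℝ)))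
  · -- nonnegativity
    filter_upwards [eventually_ge_atTop 1] with k hk
    have ha1 : (1:ℝ) ≤ (k:ℝ) := by exact_mod_cast hk
    have hxx : X k ≤ X (k + 1) := by
      apply Real.rpow_le_rpow (by linarith) _ (by norm_num)
      push_cast; linarith
    have hx1 : 1 ≤ X k := by
      have : (1:ℝ) ^ ((3:ℝ)/4) ≤ X k :=
        Real.rpow_le_rpow (by norm_num) ha1 (by norm_num)
      simpa using this
    have hlog : Real.log (X k) ≤ Real.log (X (k+1)) :=
      Real.log_le_log (by linarith) hxx
    have hlog0 : 0 ≤ Real.log (X k) := Real.log_nonneg hx1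
    simp only [H]
    nlinarith
  · -- upper bound
    filter_upwards [eventually_ge_atTop 1] with k hk
    have ha1 : (1:ℝ) ≤ (k:ℝ) := by exact_mod_cast hk
    set a : ℝ := (k:ℝ) with hadef
    have ha0 : 0 < a := by linarith
    have ha10 : 0 < a + 1 := by linarith
    have hXk : X k = a ^ ((3:ℝ)/4) := rfl
    have hXk1 : X (k+1) = (a+1) ^ ((3:ℝ)/4) := by
      simp only [X]; push_cast; ring_nf; rfl
    have hlogXk : Real.log (X k) = (3/4) * Real.log a := by
      rw [hXk, Real.log_rpow ha0]
    have hlogXk1 : Real.log (X (k+1)) = (3/4) * Real.log (a+1) := by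
      rw [hXk1, Real.log_rpow ha10]
    -- step bound : (a+1)^{3/4} - a^{3/4} ≤ a^{-1/4}
    have hstep : (a+1) ^ ((3:ℝ)/4) - a ^ ((3:ℝ)/4) ≤ a ^ (-(1/4:ℝ)) := by
      have h1 : (a+1) ^ ((3:ℝ)/4) = (a+1) * (a+1) ^ (-(1/4:ℝ)) := by
        rw [← Real.rpow_one_add' ha10.le (by norm_num)]
        norm_num
      have h2 : (a+1) ^ (-(1/4:ℝ)) ≤ a ^ (-(1/4:ℝ)) :=
        Real.rpow_le_rpow_of_nonpos ha0 (by linarith) (by norm_num)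
      have h3 : (a+1) * a ^ (-(1/4:ℝ)) = a ^ ((3:ℝ)/4) + a ^ (-(1/4:ℝ)) := by
        have : a * a ^ (-(1/4:ℝ)) = a ^ ((3:ℝ)/4) := by
          rw [← Real.rpow_one_add' ha0.le (by norm_num)]
          norm_num
        rw [add_mul, one_mul, this]
      have h4 : (a+1) * (a+1) ^ (-(1/4:ℝ)) ≤ (a+1) * a ^ (-(1/4:ℝ)) :=
        mul_le_mul_of_nonneg_left h2 ha10.le
      rw [h1]; rw [h3] at h4; linarith
    -- log growth : log(a+1) - log a ≤ 1/a
    have hloggrow : Real.log (a+1) - Real.log a ≤ 1 / a := by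
      rw [← Real.log_div (by linarith) (by linarith)]
      have := Real.log_le_sub_one_of_pos (show 0 < (a+1)/a by positivity)
      have h : (a+1)/a - 1 = 1/a := by field_simp; ring
      linarith
    -- log(a+1) ≤ 16 a^{1/8}
    have hlogbound : Real.log (a+1) ≤ 16 * a ^ ((1:ℝ)/8) := by
      have h1 : Real.log (a+1) ≤ (a+1) ^ ((1:ℝ)/8) / (1/8) :=
        Real.log_le_rpow_div ha10.le (by norm_num)
      have h2 : (a+1) ^ ((1:ℝ)/8) ≤ (2*a) ^ ((1:ℝ)/8) :=
        Real.rpow_le_rpow ha10.le (by linarith) (by norm_num)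
      have h3 : (2*a) ^ ((1:ℝ)/8) = 2 ^ ((1:ℝ)/8) * a ^ ((1:ℝ)/8) :=
        Real.mul_rpow (by norm_num) ha0.le
      have h4 : (2:ℝ) ^ ((1:ℝ)/8) ≤ 2 := by
        have : (2:ℝ) ^ ((1:ℝ)/8) ≤ (2:ℝ) ^ (1:ℝ) :=
          Real.rpow_le_rpow_of_exponent_le (by norm_num) (by norm_num)
        simpa using this
      have ha8 : 0 ≤ a ^ ((1:ℝ)/8) := (Real.rpow_nonneg ha0.le _)
      have : (2*a) ^ ((1:ℝ)/8) ≤ 2 * a ^ ((1:ℝ)/8) := by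
        rw [h3]; exact mul_le_mul_of_nonneg_right h4 ha8
      calc Real.log (a+1) ≤ (a+1) ^ ((1:ℝ)/8) / (1/8) := h1
        _ = 8 * (a+1) ^ ((1:ℝ)/8) := by ring
        _ ≤ 8 * (2 * a ^ ((1:ℝ)/8)) := by nlinarith
        _ = 16 * a ^ ((1:ℝ)/8) := by ring
    -- assemble
    have hlog1 : 0 ≤ Real.log (a+1) := Real.log_nonneg (by linarith)
    have hd : H (k+1) - H k
        = (3/4) * (((a+1) ^ ((3:ℝ)/4) - a ^ ((3:ℝ)/4)) * Real.log (a+1)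
            + a ^ ((3:ℝ)/4) * (Real.log (a+1) - Real.log a)) := by
      simp only [H]; rw [hlogXk, hlogXk1, hXk, hXk1]; ring
    have hterm1 : ((a+1) ^ ((3:ℝ)/4) - a ^ ((3:ℝ)/4)) * Real.log (a+1)
        ≤ a ^ (-(1/4:ℝ)) * (16 * a ^ ((1:ℝ)/8)) := by
      have hstep0 : 0 ≤ (a+1) ^ ((3:ℝ)/4) - a ^ ((3:ℝ)/4) := by
        have : a ^ ((3:ℝ)/4) ≤ (a+1) ^ ((3:ℝ)/4) :=
          Real.rpow_le_rpow ha0.le (by linarith) (by norm_num)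
        linarith
      exact mul_le_mul hstep hlogbound hlog1 (Real.rpow_nonneg ha0.le _)
    have hterm1' : a ^ (-(1/4:ℝ)) * (16 * a ^ ((1:ℝ)/8)) = 16 * a ^ (-(1/8:ℝ)) := by
      rw [show (16:ℝ) * a ^ ((1:ℝ)/8) = a ^ ((1:ℝ)/8) * 16 by ring, ← mul_assoc,
        ← Real.rpow_add ha0]
      norm_num; ring
    have hterm2 : a ^ ((3:ℝ)/4) * (Real.log (a+1) - Real.log a) ≤ a ^ (-(1/4:ℝ)) := by
      have h34 : 0 ≤ a ^ ((3:ℝ)/4) := Real.rpow_nonneg ha0.le _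
      have h1 : a ^ ((3:ℝ)/4) * (Real.log (a+1) - Real.log a) ≤ a ^ ((3:ℝ)/4) * (1/a) :=
        mul_le_mul_of_nonneg_left hloggrow h34
      have h2 : a ^ ((3:ℝ)/4) * (1/a) = a ^ (-(1/4:ℝ)) := by
        rw [one_div, ← Real.rpow_neg_one a, ← Real.rpow_add ha0]
        norm_num
      linarith [h1, h2.le, h2.ge]
    have hterm2' : 0 ≤ a ^ (-(1/4:ℝ)) := Real.rpow_nonneg ha0.le _
    rw [hd]
    have h16 : 0 ≤ (16:ℝ) * a ^ (-(1/8:ℝ)) := by positivity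
    nlinarith [hterm1, hterm2, hterm1']
  · -- bound tends to 0
    have h1 : Tendsto (fun k : ℕ => (k:ℝ) ^ (-(1/8:ℝ))) atTop (nhds 0) :=
      (tendsto_rpow_neg_atTop (by norm_num : (0:ℝ) < 1/8)).comp tendsto_natCast_atTop_atTop
    have h2 : Tendsto (fun k : ℕ => (k:ℝ) ^ (-(1/4:ℝ))) atTop (nhds 0) :=
      (tendsto_rpow_neg_atTop (by norm_num : (0:ℝ) < 1/4)).comp tendsto_natCast_atTop_atTop
    have := (h1.const_mul 16).add h2
    simpa using this

end SparseAux

open SparseAux in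
/-- `log n_{k+1}·log log n_{k+1} − log n_k·log log n_k → 0`. -/
theorem sparseSeq_loglog_gap_small :
    Tendsto
      (fun k : ℕ =>
        Real.log (sparseSeq (k + 1)) * Real.log (Real.log (sparseSeq (k + 1))) -
          Real.log (sparseSeq k) * Real.log (Real.log (sparseSeq k)))
      atTop (nhds 0) := by
  have hA : Tendsto (fun k => G k - H k) atTop (nhds 0) := by
    have := tendsto_A.neg
    simpa [neg_sub] using this
  have hA' : Tendsto (fun k => G (k + 1) - H (k + 1)) atTop (nhds 0) :=
    hA.comp (tendsto_add_atTop_nat 1)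
  have hB := tendsto_B
  have hfinal := (hA'.add hB).sub hA
  have heq : (fun k : ℕ =>
        Real.log (sparseSeq (k + 1)) * Real.log (Real.log (sparseSeq (k + 1))) -
          Real.log (sparseSeq k) * Real.log (Real.log (sparseSeq k)))
      = fun k => (G (k + 1) - H (k + 1)) + (H (k + 1) - H k) - (G k - H k) := by
    funext k
    simp only [G, L]
    ring
  rw [heq]
  simpa using hfinal
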